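/- Let Ω be an open subset of ℝⁿ and let (f_m) be a sequence of functions ℝⁿ → ℝ that are continuously differentiable on Ω (each f_m is differentiable at every point of Ω and x ↦ ∇f_m(x) is continuous on Ω), such that (f_m) is uniformly Cauchy on Ω and essSup_{Ω} ‖∇f_m − ∇f_l‖ → 0 as m, l → ∞ (essential supremum with respect to Lebesgue measure restricted to Ω). Let f be the uniform limit of (f_m). Then f is continuously differentiable on Ω: f is differentiable at every point of Ω and x ↦ ∇f(x) is continuous on Ω. -/

import Mathlib

open MeasureTheory Filter ENNReal NNReal

lemma aux_norm_le_essSup {n : ℕ} {Ω : Set (EuclideanSpace ℝ (Fin n))} (hΩ : IsOpen Ω)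
    {h : EuclideanSpace ℝ (Fin n) → (EuclideanSpace ℝ (Fin n) →L[ℝ] ℝ)}
    (hc : ContinuousOn h Ω) {x : EuclideanSpace ℝ (Fin n)} (hx : x ∈ Ω) :
    (‖h x‖₊ : ℝ≥0∞) ≤ essSup (fun y => (‖h y‖₊ : ℝ≥0∞)) (volume.restrict Ω) := by
  by_contra hlt
  push_neg at hlt
  obtain ⟨c, hc1, hc2⟩ := ENNReal.lt_iff_exists_nnreal_btwn.mp hlt
  set U : Set (EuclideanSpace ℝ (Fin n)) := Ω ∩ (fun y => ‖h y‖) ⁻¹' Set.Ioi (c : ℝ) with hU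
  have hUopen : IsOpen U :=
    (hc.norm).isOpen_inter_preimage hΩ isOpen_Ioi
  have hxU : x ∈ U := by
    refine ⟨hx, ?_⟩
    have : (c : ℝ≥0∞) < (‖h x‖₊ : ℝ≥0∞) := hc2
    simpa [Set.mem_preimage, ← NNReal.coe_lt_coe, coe_nnnorm] using ENNReal.coe_lt_coe.mp this
  have hpos : 0 < volume U := hUopen.measure_pos volume ⟨x, hxU⟩
  have hae : ∀ᵐ y ∂(volume.restrict Ω),
      (‖h y‖₊ : ℝ≥0∞) ≤ essSup (fun y => (‖h y‖₊ : ℝ≥0∞)) (volume.restrict Ω) :=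
    _root_.ae_le_essSup
  rw [ae_iff] at hae
  have hsub : U ⊆ {y | ¬ (‖h y‖₊ : ℝ≥0∞) ≤ essSup (fun y => (‖h y‖₊ : ℝ≥0∞)) (volume.restrict Ω)} := by
    intro y hy
    simp only [Set.mem_setOf_eq, not_le]
    refine lt_trans hc1 ?_
    have : (c : ℝ) < ‖h y‖ := hy.2
    exact_mod_cast ENNReal.coe_lt_coe.mpr (by simpa [← NNReal.coe_lt_coe, coe_nnnorm] using this)
  have h0 : (volume.restrict Ω) U = 0 := measure_mono_null hsub hae
  rw [Measure.restrict_apply hUopen.measurableSet] at h0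
  have : U ∩ Ω = U := Set.inter_eq_self_of_subset_left (Set.inter_subset_left)
  rw [this] at h0
  exact hpos.ne' h0

/-- `C¹(Ω) ∩ W^{1,∞}(Ω)` is closed in `W^{1,∞}(Ω)`: if `(f_m)` are continuously differentiable
on an open set `Ω ⊆ ℝⁿ`, `(f_m)` is uniformly Cauchy on `Ω`, the derivatives are Cauchy in the
Lebesgue-essential-supremum sense, and `f` is the uniform limit of `(f_m)`, then `f` is
continuously differentiable on `Ω`. -/
theorem stmt_13 {n : ℕ} (Ω : Set (EuclideanSpace ℝ (Fin n))) (hΩ : IsOpen Ω)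
    (f : ℕ → EuclideanSpace ℝ (Fin n) → ℝ)
    (F : EuclideanSpace ℝ (Fin n) → ℝ)
    (hdiff : ∀ m, ∀ x ∈ Ω, DifferentiableAt ℝ (f m) x)
    (hcont : ∀ m, ContinuousOn (fun x => fderiv ℝ (f m) x) Ω)
    (hcauchy : UniformCauchySeqOn f atTop Ω)
    (hgradCauchy : Tendsto
      (fun p : ℕ × ℕ =>
        essSup (fun x => (‖fderiv ℝ (f p.1) x - fderiv ℝ (f p.2) x‖₊ : ℝ≥0∞))
          (volume.restrict Ω))
      atTop (nhds 0))
    (hlim : TendstoUniformlyOn f F atTop Ω) :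
    (∀ x ∈ Ω, DifferentiableAt ℝ F x) ∧
      ContinuousOn (fun x => fderiv ℝ F x) Ω := by
  -- the derivatives are uniformly Cauchy on Ω
  have hdcauchy : UniformCauchySeqOn (fun m x => fderiv ℝ (f m) x) atTop Ω := by
    rw [Metric.uniformCauchySeqOn_iff]
    intro ε hε
    have hε' : (0 : ℝ≥0∞) < ENNReal.ofReal ε := ENNReal.ofReal_pos.mpr hε
    have := hgradCauchy.eventually_lt_const hε'
    rw [eventually_atTop] at this
    obtain ⟨N, hN⟩ := this
    refine ⟨max N.1 N.2, fun m hm l hl x hx => ?_⟩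
    have hkey := hN (m, l) ⟨le_trans (le_max_left _ _) hm, le_trans (le_max_right _ _) hl⟩
    have hb : (‖fderiv ℝ (f m) x - fderiv ℝ (f l) x‖₊ : ℝ≥0∞)
        ≤ essSup (fun x => (‖fderiv ℝ (f m) x - fderiv ℝ (f l) x‖₊ : ℝ≥0∞)) (volume.restrict Ω) := by
      exact aux_norm_le_essSup hΩ (((hcont m).sub (hcont l))) hx
    have hlt : (‖fderiv ℝ (f m) x - fderiv ℝ (f l) x‖₊ : ℝ≥0∞) < ENNReal.ofReal ε :=
      lt_of_le_of_lt hb hkey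
    rw [dist_eq_norm]
    have := (ENNReal.lt_ofReal_iff_toReal_lt (by simp)).mp hlt
    simpa [coe_nnnorm] using this
  -- pointwise limit of derivatives
  have hpc : ∀ x ∈ Ω, CauchySeq (fun m => fderiv ℝ (f m) x) := fun x hx =>
    hdcauchy.cauchySeq hx
  set g' : EuclideanSpace ℝ (Fin n) → (EuclideanSpace ℝ (Fin n) →L[ℝ] ℝ) :=
    fun x => limUnder atTop (fun m => fderiv ℝ (f m) x) with hg'
  have hptend : ∀ x ∈ Ω, Tendsto (fun m => fderiv ℝ (f m) x) atTop (nhds (g' x)) := by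
    intro x hx
    exact (hpc x hx).tendsto_limUnder
  have hdu : TendstoUniformlyOn (fun m x => fderiv ℝ (f m) x) g' atTop Ω :=
    hdcauchy.tendstoUniformlyOn_of_tendsto hptend
  have hF : ∀ x ∈ Ω, HasFDerivAt F (g' x) x := by
    intro x hx
    exact hasFDerivAt_of_tendstoUniformlyOn hΩ hdu
      (fun m y hy => (hdiff m y hy).hasFDerivAt)
      (fun y hy => hlim.tendsto_at hy) hx
  refine ⟨fun x hx => (hF x hx).differentiableAt, ?_⟩
  have hg'cont : ContinuousOn g' Ω :=
    hdu.continuousOn (Frequently.of_forall hcont)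
  exact hg'cont.congr fun x hx => (hF x hx).fderiv
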